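/- There exists an instance with three agents and identical resources in which no complete allocation satisfies the fairness notion obtained from EF1-init by replacing the condition for b_i > b_j with: there exist X* ⊆ X_j with u_j(X*) < b_i − b_j and r ∈ X_j such that u_i(X_i) ≥ u_i(X_j \ (X* ∪ {r})). Concretely: with 10 identical resources, agents 1, 2, 3 with b_1 = b_2 = 0, b_3 = 20, u_1({r}) = u_3({r}) = 20, and u_2({r}) = 5 for all resources r, no complete allocation satisfies this notion. -/

import Mathlib

/-- Initial utilities of agents 1, 2, 3 (indices 0, 1, 2). -/
def b5 : Fin 3 → ℚ := ![0, 0, 20]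
/-- Per-resource utilities (identical resources). -/
def v5 : Fin 3 → ℚ := ![20, 5, 20]

/-- The (unsatisfiable) relaxation of EF1-init from Example 3.6: for `b i > b j`
one may remove a set `X* ⊆ X j` with `u_j(X*) < b i - b j` plus one resource. -/
def relaxedEF1init5 (X : Fin 3 → Finset (Fin 10)) : Prop :=
  ∀ i j : Fin 3, X j = ∅ ∨
    ((b5 i ≤ b5 j → ∃ r ∈ X j,
        b5 j + v5 i * (((X j).erase r).card : ℚ) ≤ b5 i + v5 i * ((X i).card : ℚ)) ∧
     (b5 j < b5 i → ∃ Xs ⊆ X j, v5 j * (Xs.card : ℚ) < b5 i - b5 j ∧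
        ∃ r ∈ X j, v5 i * (((X j \ insert r Xs).card : ℚ)) ≤ v5 i * ((X i).card : ℚ)))

lemma card_sdiff_aux {α : Type*} [DecidableEq α] (t Xs : Finset α) (r : α) :
    t.card ≤ (t \ insert r Xs).card + Xs.card + 1 := by
  calc t.card ≤ (t \ insert r Xs).card + (insert r Xs).card :=
        Finset.card_le_card_sdiff_add_card
    _ ≤ (t \ insert r Xs).card + (Xs.card + 1) := by
        exact Nat.add_le_add_left (Finset.card_insert_le _ _) _
    _ = (t \ insert r Xs).card + Xs.card + 1 := by ring

/-- With 10 identical resources, `b = (0,0,20)`, per-resource values `(20,5,20)`,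
no complete allocation satisfies the relaxed notion. -/
theorem stmt_5 :
    ∀ X : Fin 3 → Finset (Fin 10),
      (∀ k l : Fin 3, k ≠ l → Disjoint (X k) (X l)) →
      (X 0 ∪ X 1 ∪ X 2 = Finset.univ) →
      ¬ relaxedEF1init5 X := by
  intro X hdis hun h
  set a := (X 0).card with ha'
  set b := (X 1).card with hb'
  set c := (X 2).card with hc'
  have d01 := hdis 0 1 (by decide)
  have d02 := hdis 0 2 (by decide)
  have d12 := hdis 1 2 (by decide)
  have hsum : a + b + c = 10 := by
    have h10 : (X 0 ∪ X 1 ∪ X 2).card = 10 := by rw [hun]; simp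
    rw [Finset.card_union_of_disjoint (by rw [Finset.disjoint_union_left]; exact ⟨d02, d12⟩),
        Finset.card_union_of_disjoint d01] at h10
    exact h10
  -- I1 : c ≥ 1 → c ≤ a
  have I1 : 1 ≤ c → c ≤ a := by
    intro hc
    rcases h 0 2 with he | ⟨h1, _⟩
    · simp [he] at hc'; omega
    obtain ⟨r, hr, hle⟩ := h1 (by norm_num [b5, Matrix.cons_val_two, Matrix.tail_cons, Matrix.head_cons])
    rw [Finset.card_erase_of_mem hr] at hle
    simp only [b5, v5, Matrix.cons_val_zero, Matrix.cons_val_two, Matrix.cons_val_one,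
      Matrix.head_cons, Matrix.tail_cons] at hle
    have : ((c - 1 : ℕ) : ℚ) = (c : ℚ) - 1 := by
      push_cast [Nat.cast_sub hc]; ring
    rw [← hc', this] at hle
    have : (c : ℚ) ≤ (a : ℚ) := by linarith
    exact_mod_cast this
  -- I2 : c ≥ 1 → c + 3 ≤ b
  have I2 : 1 ≤ c → c + 3 ≤ b := by
    intro hc
    rcases h 1 2 with he | ⟨h1, _⟩
    · simp [he] at hc'; omega
    obtain ⟨r, hr, hle⟩ := h1 (by norm_num [b5, Matrix.cons_val_two, Matrix.tail_cons, Matrix.head_cons])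
    rw [Finset.card_erase_of_mem hr] at hle
    simp only [b5, v5, Matrix.cons_val_zero, Matrix.cons_val_two, Matrix.cons_val_one,
      Matrix.head_cons, Matrix.tail_cons] at hle
    have : ((c - 1 : ℕ) : ℚ) = (c : ℚ) - 1 := by
      push_cast [Nat.cast_sub hc]; ring
    rw [← hc', this] at hle
    have : (c : ℚ) + 3 ≤ (b : ℚ) := by linarith
    exact_mod_cast this
  -- I3 : a ≥ 1 → a ≤ c + 1
  have I3 : 1 ≤ a → a ≤ c + 1 := by
    intro haa
    rcases h 2 0 with he | ⟨_, h2⟩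
    · simp [he] at ha'; omega
    obtain ⟨Xs, _, hXs, r, hr, hle⟩ := h2 (by norm_num [b5, Matrix.cons_val_two, Matrix.tail_cons, Matrix.head_cons])
    simp only [b5, v5, Matrix.cons_val_zero, Matrix.cons_val_two, Matrix.cons_val_one,
      Matrix.head_cons, Matrix.tail_cons] at hXs hle
    have hXs0 : Xs.card = 0 := by
      by_contra hne
      have : (1 : ℚ) ≤ (Xs.card : ℚ) := by exact_mod_cast Nat.one_le_iff_ne_zero.mpr hne
      linarith
    have hcard : a ≤ (X 0 \ insert r Xs).card + Xs.card + 1 := card_sdiff_aux _ _ _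
    have hle' : (X 0 \ insert r Xs).card ≤ c := by
      have : ((X 0 \ insert r Xs).card : ℚ) ≤ (c : ℚ) := by linarith
      exact_mod_cast this
    omega
  -- I4 : b ≥ 1 → b ≤ a + 1
  have I4 : 1 ≤ b → b ≤ a + 1 := by
    intro hb
    rcases h 0 1 with he | ⟨h1, _⟩
    · simp [he] at hb'; omega
    obtain ⟨r, hr, hle⟩ := h1 (by norm_num [b5])
    rw [Finset.card_erase_of_mem hr] at hle
    simp only [b5, v5, Matrix.cons_val_zero, Matrix.cons_val_two, Matrix.cons_val_one,
      Matrix.head_cons, Matrix.tail_cons] at hle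
    have : ((b - 1 : ℕ) : ℚ) = (b : ℚ) - 1 := by
      push_cast [Nat.cast_sub hb]; ring
    rw [← hb', this] at hle
    have : (b : ℚ) ≤ (a : ℚ) + 1 := by linarith
    exact_mod_cast this
  -- I5 : b ≥ 1 → b ≤ c + 4
  have I5 : 1 ≤ b → b ≤ c + 4 := by
    intro hb
    rcases h 2 1 with he | ⟨_, h2⟩
    · simp [he] at hb'; omega
    obtain ⟨Xs, _, hXs, r, hr, hle⟩ := h2 (by norm_num [b5, Matrix.cons_val_two, Matrix.tail_cons, Matrix.head_cons])
    simp only [b5, v5, Matrix.cons_val_zero, Matrix.cons_val_two, Matrix.cons_val_one,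
      Matrix.head_cons, Matrix.tail_cons] at hXs hle
    have hXs3 : Xs.card ≤ 3 := by
      by_contra hne
      have : (4 : ℚ) ≤ (Xs.card : ℚ) := by exact_mod_cast Nat.succ_le_of_lt (Nat.lt_of_not_le hne)
      linarith
    have hcard : b ≤ (X 1 \ insert r Xs).card + Xs.card + 1 := card_sdiff_aux _ _ _
    have hle' : (X 1 \ insert r Xs).card ≤ c := by
      have : ((X 1 \ insert r Xs).card : ℚ) ≤ (c : ℚ) := by linarith
      exact_mod_cast this
    omega
  -- finish
  rcases Nat.eq_zero_or_pos c with hc | hc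
  · rcases Nat.eq_zero_or_pos b with hb | hb
    · have := I3 (by omega); omega
    · have h5 := I5 hb
      have h4 := I4 hb
      rcases Nat.eq_zero_or_pos a with haz | haz
      · omega
      · have := I3 haz; omega
  · have i1 := I1 hc
    have i2 := I2 hc
    have i3 := I3 (by omega)
    have i4 := I4 (by omega)
    omega
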